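/- Let k be a field of characteristic 2, G a finite group, and ε : G → ℤ/2ℤ a homomorphism such that ε(g) = 0 for every g ∈ G with g² = 1. For every unitary element x = Σ_{g∈G} x_g·g of k[G] (i.e. x·x* = 1), set λ(x) = Σ_{g : ε(g)=0} x_g and μ(x) = Σ_{g : ε(g)=1} x_g. Then (λ(x), μ(x)) = (1, 0) or (λ(x), μ(x)) = (0, 1). -/

import Mathlib

/-- The canonical involution `x ↦ x*` of the group algebra `k[G]`, determined by
`g* = g⁻¹` for `g ∈ G`. -/
noncomputable def gStar {k G : Type*} [Semiring k] [Group G] (x : MonoidAlgebra k G) :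
    MonoidAlgebra k G := MonoidAlgebra.ofCoeff (Finsupp.equivMapDomain (Equiv.inv G) x.coeff)

/-- Let `k` be a field of characteristic 2, `G` a finite group, `ε : G → ℤ/2ℤ` a
homomorphism vanishing on all `g` with `g² = 1` (an essential character). For every
unitary `x ∈ k[G]` (i.e. `x·x* = 1`), the sums `λ(x) = Σ_{ε(g)=0} x_g` and
`μ(x) = Σ_{ε(g)=1} x_g` satisfy `(λ(x), μ(x)) = (1,0)` or `(0,1)`. -/
theorem stmt_3 (k G : Type*) [Field k] [CharP k 2] [Group G] [Fintype G]
    (ε : G → ZMod 2) (hhom : ∀ a b : G, ε (a * b) = ε a + ε b)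
    (hess : ∀ g : G, g ^ 2 = 1 → ε g = 0)
    (x : MonoidAlgebra k G) (hx : x * gStar x = 1) :
    ((∑ g ∈ Finset.univ.filter fun g => ε g = 0, x.coeff g) = 1 ∧
        (∑ g ∈ Finset.univ.filter fun g => ε g = 1, x.coeff g) = 0) ∨
      ((∑ g ∈ Finset.univ.filter fun g => ε g = 0, x.coeff g) = 0 ∧
        (∑ g ∈ Finset.univ.filter fun g => ε g = 1, x.coeff g) = 1) := by
  classical
  have hstar : ∀ g : G, (gStar x).coeff g = x.coeff g⁻¹ := fun g => rfl
  -- ε(1) = 0 and ε(g⁻¹) = ε(g)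
  have hε1 : ε 1 = 0 := by
    have h := hhom 1 1
    rw [one_mul] at h
    exact (left_eq_add.mp h)
  have hzmod : ∀ a b : ZMod 2, a + b = 0 → b = a := by decide
  have hεinv : ∀ g : G, ε g⁻¹ = ε g := by
    intro g
    have h := hhom g g⁻¹
    rw [mul_inv_cancel, hε1] at h
    exact hzmod _ _ h.symm
  -- coefficientwise expansion of x * gStar x
  have hexpand : ∀ h : G, (x * gStar x).coeff h
      = ∑ a : G, ∑ b : G, if a * b⁻¹ = h then x.coeff a * x.coeff b else 0 := by
    intro h
    rw [MonoidAlgebra.coeff_mul]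
    rw [Finsupp.sum_fintype _ _ (fun a => by simp [Finsupp.sum])]
    refine Finset.sum_congr rfl fun a _ => ?_
    rw [Finsupp.sum_fintype _ _ (fun b => by simp)]
    exact Fintype.sum_equiv (Equiv.inv G)
      (fun b => if a * b = h then x.coeff a * (gStar x).coeff b else 0)
      (fun b => if a * b⁻¹ = h then x.coeff a * x.coeff b else 0)
      (fun b => by simp [hstar])
  -- summed over any set S of group elements
  have key : ∀ S : Finset G,
      (if (1:G) ∈ S then (1:k) else 0)
        = ∑ a : G, ∑ b : G, if a * b⁻¹ ∈ S then x.coeff a * x.coeff b else 0 := by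
    intro S
    have h1 : ∑ h ∈ S, (x * gStar x).coeff h = (if (1:G) ∈ S then (1:k) else 0) := by
      rw [hx]
      have : ∀ h : G, (1 : MonoidAlgebra k G).coeff h = if (1:G) = h then (1:k) else 0 := by
        intro h
        rw [MonoidAlgebra.one_def, MonoidAlgebra.coeff_single, Finsupp.single_apply]
      rw [Finset.sum_congr rfl fun h _ => this h, Finset.sum_ite_eq]
    rw [← h1, Finset.sum_congr rfl fun h _ => hexpand h, Finset.sum_comm]
    refine Finset.sum_congr rfl fun a _ => ?_
    rw [Finset.sum_comm]
    refine Finset.sum_congr rfl fun b _ => ?_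
    exact Finset.sum_ite_eq S (a * b⁻¹) fun _ => x.coeff a * x.coeff b
  set L := ∑ g ∈ Finset.univ.filter fun g => ε g = 0, x.coeff g with hL
  set M := ∑ g ∈ Finset.univ.filter fun g => ε g = 1, x.coeff g with hM
  -- Step A : L + M = 1
  have htot : (∑ g : G, x.coeff g) * (∑ g : G, x.coeff g) = 1 := by
    have h := key Finset.univ
    simp only [Finset.mem_univ, if_true] at h
    rw [h, Finset.sum_mul_sum]
  have h2 : (2 : k) = 0 := CharP.cast_eq_zero k 2
  have hself : ∀ t : k, t + t = 0 := by
    intro t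
    rw [← two_mul, h2, zero_mul]
  have haug : (∑ g : G, x.coeff g) = 1 := by
    set t := ∑ g : G, x.coeff g
    have hsq : (t + 1) * (t + 1) = 0 := by
      have hr : (t + 1) * (t + 1) = t * t + (t + t) + 1 := by ring
      rw [hr, htot, hself, add_zero, hself]
    have ht1 : t + 1 = 0 := mul_self_eq_zero.mp hsq
    calc t = t + 1 + 1 := by rw [add_assoc, hself, add_zero]
      _ = 1 := by rw [ht1, zero_add]
  have hLM : L + M = 1 := by
    have hsplit := Finset.sum_filter_add_sum_filter_not Finset.univ
      (fun g => ε g = 0) (fun g => x.coeff g)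
    have hfeq : (Finset.univ.filter fun g => ¬ ε g = 0)
        = Finset.univ.filter fun g => ε g = 1 := by
      apply Finset.filter_congr
      intro g _
      have hz : ∀ a : ZMod 2, (¬ a = 0) ↔ a = 1 := by decide
      simp [hz]
    rw [hfeq] at hsplit
    rw [hL, hM, hsplit, haug]
  -- Step B : L * M = 0 via a transversal T of the inversion on ε⁻¹(1)
  set f : G → ℕ := fun g => ((Fintype.equivFin G) g : ℕ) with hf
  have hfinj : Function.Injective f := fun a b hab =>
    (Fintype.equivFin G).injective (Fin.val_injective hab)
  set T : Finset G := Finset.univ.filter (fun g => ε g = 1 ∧ f g < f g⁻¹) with hT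
  have hT1 : ∀ g ∈ T, ε g = 1 := fun g hg => ((Finset.mem_filter.mp hg).2).1
  have hTne : ∀ g : G, ε g = 1 → g ≠ g⁻¹ := by
    intro g hg hgg
    have hg2 : g ^ 2 = 1 := by
      rw [pow_two]
      nth_rewrite 2 [hgg]
      exact mul_inv_cancel g
    rw [hess g hg2] at hg
    exact zero_ne_one hg
  have hTiff : ∀ g : G, ε g = 1 → (g ∈ T ↔ g⁻¹ ∉ T) := by
    intro g hg
    have hne : f g ≠ f g⁻¹ := fun h => hTne g hg (hfinj h)
    constructor
    · intro hgT hgiT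
      have h1 := ((Finset.mem_filter.mp hgT).2).2
      have h2 := ((Finset.mem_filter.mp hgiT).2).2
      rw [inv_inv] at h2
      exact absurd (lt_trans h1 h2) (lt_irrefl _)
    · intro hgi
      refine Finset.mem_filter.mpr ⟨Finset.mem_univ g, hg, ?_⟩
      by_contra hlt
      push_neg at hlt
      have hlt' : f g⁻¹ < f g := lt_of_le_of_ne hlt (fun h => hne h.symm)
      exact hgi (Finset.mem_filter.mpr ⟨Finset.mem_univ _, by rw [hεinv]; exact hg,
        by rw [inv_inv]; exact hlt'⟩)
  have h1T : (1:G) ∉ T := by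
    intro h1T
    have h := hT1 1 h1T
    rw [hε1] at h
    exact zero_ne_one h
  have hTkey : (0 : k) = ∑ a : G, ∑ b : G, if a * b⁻¹ ∈ T then x.coeff a * x.coeff b else 0 := by
    have h := key T
    rwa [if_neg h1T] at h
  -- inversion fact
  have hinvmem : ∀ a b : G, ε a + ε b = 1 → (a * b⁻¹ ∉ T ↔ b * a⁻¹ ∈ T) := by
    intro a b hab
    have hεab : ε (a * b⁻¹) = 1 := by rw [hhom, hεinv, hab]
    have h := hTiff _ hεab
    rw [mul_inv_rev, inv_inv] at h
    constructor
    · intro hni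
      by_contra hnb
      exact hni (h.mpr hnb)
    · intro hb hmem
      exact (h.mp hmem) hb
  have hcases : ∀ u v : ZMod 2, u + v = 1 → (u = 0 ∧ v = 1) ∨ (¬ u = 0 ∧ u = 1 ∧ v = 0) := by
    decide
  -- L * M = 0
  have hLM0 : L * M = 0 := by
    rw [hL, hM, Finset.sum_mul_sum, ← Finset.sum_product', ← Finset.filter_product]
    have hrhs : (∑ a : G, ∑ b : G, if a * b⁻¹ ∈ T then x.coeff a * x.coeff b else 0)
        = ∑ p ∈ (Finset.univ ×ˢ Finset.univ).filter
            (fun p : G × G => p.1 * p.2⁻¹ ∈ T), x.coeff p.1 * x.coeff p.2 := by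
      rw [Finset.sum_filter, ← Finset.sum_product']
    rw [hTkey, hrhs]
    have hmem1 : ∀ p : G × G,
        p ∈ (Finset.univ ×ˢ Finset.univ).filter (fun p : G × G => ε p.1 = 0 ∧ ε p.2 = 1)
          ↔ (ε p.1 = 0 ∧ ε p.2 = 1) := by
      intro p; simp [Finset.mem_filter]
    have hmem2 : ∀ p : G × G,
        p ∈ (Finset.univ ×ˢ Finset.univ).filter (fun p : G × G => p.1 * p.2⁻¹ ∈ T)
          ↔ p.1 * p.2⁻¹ ∈ T := by
      intro p; simp [Finset.mem_filter]
    refine Finset.sum_nbij'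
      (fun p : G × G => if p.1 * p.2⁻¹ ∈ T then p else p.swap)
      (fun p : G × G => if ε p.1 = 0 then p else p.swap)
      ?_ ?_ ?_ ?_ ?_
    · rintro ⟨a, b⟩ hp
      rw [hmem1] at hp
      obtain ⟨ha, hb⟩ := hp
      have hab : ε a + ε b = 1 := by rw [ha, hb]; rfl
      dsimp only
      by_cases hm : a * b⁻¹ ∈ T
      · rw [if_pos hm, hmem2]; exact hm
      · rw [if_neg hm, hmem2, Prod.snd_swap, Prod.fst_swap]
        exact (hinvmem a b hab).mp hm
    · rintro ⟨a, b⟩ hp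
      rw [hmem2] at hp
      have hab : ε a + ε b = 1 := by
        have h := hT1 _ hp
        rwa [hhom, hεinv] at h
      dsimp only
      rcases hcases _ _ hab with ⟨ha, hb⟩ | ⟨ha, ha1, hb⟩
      · rw [if_pos ha, hmem1]; exact ⟨ha, hb⟩
      · rw [if_neg ha, hmem1, Prod.snd_swap, Prod.fst_swap]
        exact ⟨hb, ha1⟩
    · rintro ⟨a, b⟩ hp
      rw [hmem1] at hp
      obtain ⟨ha, hb⟩ := hp
      dsimp only at ha hb ⊢
      by_cases hm : a * b⁻¹ ∈ T
      · rw [if_pos hm]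
        dsimp only
        rw [if_pos ha]
      · rw [if_neg hm, Prod.swap_prod_mk]
        dsimp only
        rw [if_neg (by rw [hb]; exact one_ne_zero), Prod.swap_prod_mk]
    · rintro ⟨a, b⟩ hp
      rw [hmem2] at hp
      dsimp only at hp
      have hab : ε a + ε b = 1 := by
        have h := hT1 _ hp
        rwa [hhom, hεinv] at h
      dsimp only
      rcases hcases _ _ hab with ⟨ha, _⟩ | ⟨ha, _, _⟩
      · rw [if_pos ha]
        dsimp only
        rw [if_pos hp]
      · rw [if_neg ha, Prod.swap_prod_mk]
        dsimp only
        have hba : ε b + ε a = 1 := by rwa [add_comm] at hab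
        rw [if_neg ((hinvmem b a hba).mpr hp), Prod.swap_prod_mk]
    · rintro ⟨a, b⟩ hp
      dsimp only
      by_cases hm : a * b⁻¹ ∈ T
      · rw [if_pos hm]
      · rw [if_neg hm, Prod.swap_prod_mk]
        exact mul_comm _ _
  -- conclude
  rcases mul_eq_zero.mp hLM0 with hL0 | hM0
  · right
    refine ⟨hL0, ?_⟩
    rw [hL0, zero_add] at hLM; exact hLM
  · left
    refine ⟨?_, hM0⟩
    rw [hM0, add_zero] at hLM; exact hLM
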